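/- Let $F(x) = \sum_{j=1}^N \frac{x_j^2}{a_j^2} - 1$ with $a_j > 0$ pairwise distinct, let $\Gamma = \{F = 0\}$ be the ellipsoid, and $V = F^2 + 1$ near $\Gamma$. Then the critical points of the restriction of $\Delta V$ to $\Gamma$ are exactly the $2N$ points $(\pm a_1, 0, \dots, 0), \dots, (0, \dots, 0, \pm a_N)$. -/

import Mathlib

set_option maxHeartbeats 1000000

open MeasureTheory Real Asymptotics
open scoped InnerProductSpace

noncomputable def laplacian {N : ℕ} (u : EuclideanSpace ℝ (Fin N) → ℝ)
    (x : EuclideanSpace ℝ (Fin N)) : ℝ :=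
  ∑ i, iteratedFDeriv ℝ 2 u x ![EuclideanSpace.single i 1, EuclideanSpace.single i 1]

theorem stmt11 (N : ℕ) (hN : 2 ≤ N) (a : Fin N → ℝ) (ha : ∀ j, 0 < a j)
    (hdist : ∀ j l, j ≠ l → a j ≠ a l)
    (F V : EuclideanSpace ℝ (Fin N) → ℝ)
    (hF : F = fun x => ∑ j, x j ^ 2 / a j ^ 2 - 1)
    (hV : V = fun x => F x ^ 2 + 1) :
    {x : EuclideanSpace ℝ (Fin N) | F x = 0 ∧
        ∃ lam : ℝ, gradient (laplacian V) x = lam • gradient F x}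
      = {x : EuclideanSpace ℝ (Fin N) | ∃ j : Fin N,
          x = EuclideanSpace.single j (a j) ∨ x = EuclideanSpace.single j (-(a j))} := by
  classical
  have haz : ∀ j, a j ≠ 0 := fun j => (ha j).ne'
  set c0 : ℝ := ∑ l, 4 / a l ^ 2 with hc0
  -- the derivative of F as a continuous-linear-map-valued continuous linear map
  set L : EuclideanSpace ℝ (Fin N) →L[ℝ] (EuclideanSpace ℝ (Fin N) →L[ℝ] ℝ) :=
    ∑ j, ((2 / a j ^ 2) •
      (EuclideanSpace.proj j : EuclideanSpace ℝ (Fin N) →L[ℝ] ℝ)).smulRight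
      (EuclideanSpace.proj j) with hL
  have hLa : ∀ (x v : EuclideanSpace ℝ (Fin N)), L x v = ∑ j, (2 / a j ^ 2 * x j) * v j := by
    intro x v
    rw [hL]
    simp only [ContinuousLinearMap.sum_apply, ContinuousLinearMap.smulRight_apply,
      ContinuousLinearMap.smul_apply, smul_eq_mul]
    rfl
  have hLs : ∀ (x : EuclideanSpace ℝ (Fin N)) (i : Fin N),
      L x (EuclideanSpace.single i 1) = 2 / a i ^ 2 * x i := by
    intro x i
    rw [hLa]
    simp [EuclideanSpace.single_apply, Finset.sum_ite_eq']
  have hsingle : ∀ (i : Fin N), (EuclideanSpace.single i (1:ℝ)) i = 1 := by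
    intro i; simp [EuclideanSpace.single_apply]
  -- derivative of F
  have hFd : ∀ x, HasFDerivAt F (L x) x := by
    intro x
    have h0 : ∀ j : Fin N, HasFDerivAt (fun y : EuclideanSpace ℝ (Fin N) => y j ^ 2 / a j ^ 2)
        ((2 / a j ^ 2 * x j) •
          (EuclideanSpace.proj j : EuclideanSpace ℝ (Fin N) →L[ℝ] ℝ)) x := by
      intro j
      have h1 : HasFDerivAt (fun y : EuclideanSpace ℝ (Fin N) => y j)
          (EuclideanSpace.proj j : EuclideanSpace ℝ (Fin N) →L[ℝ] ℝ) x :=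
        (EuclideanSpace.proj j : EuclideanSpace ℝ (Fin N) →L[ℝ] ℝ).hasFDerivAt
      have h2 := (h1.mul h1).const_mul ((a j ^ 2)⁻¹)
      have hfun : (fun y : EuclideanSpace ℝ (Fin N) => y j ^ 2 / a j ^ 2)
          = fun y => (a j ^ 2)⁻¹ * (y j * y j) := by funext y; ring
      have hder : (2 / a j ^ 2 * x j) •
            (EuclideanSpace.proj j : EuclideanSpace ℝ (Fin N) →L[ℝ] ℝ)
          = (a j ^ 2)⁻¹ • (x j • (EuclideanSpace.proj j : EuclideanSpace ℝ (Fin N) →L[ℝ] ℝ)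
              + x j • (EuclideanSpace.proj j : EuclideanSpace ℝ (Fin N) →L[ℝ] ℝ)) := by
        ext v
        simp only [ContinuousLinearMap.smul_apply, ContinuousLinearMap.add_apply, smul_eq_mul]
        ring
      rw [hfun, hder]
      exact h2
    have hsum := (HasFDerivAt.fun_sum (fun j (_ : j ∈ Finset.univ) => h0 j)).sub_const 1
    have hLx : L x = ∑ j, (2 / a j ^ 2 * x j) •
        (EuclideanSpace.proj j : EuclideanSpace ℝ (Fin N) →L[ℝ] ℝ) := by
      ext v
      rw [hLa]
      simp only [ContinuousLinearMap.sum_apply, ContinuousLinearMap.smul_apply, smul_eq_mul]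
      rfl
    rw [hF, hLx]
    exact hsum
  -- derivative of V
  have hVd : ∀ x, HasFDerivAt V ((2 * F x) • L x) x := by
    intro x
    have h2 := ((hFd x).mul (hFd x)).add_const 1
    have hfun : V = fun y => F y * F y + 1 := by rw [hV]; funext y; ring
    have hder : (2 * F x) • L x = F x • L x + F x • L x := by
      ext v; simp only [ContinuousLinearMap.smul_apply, ContinuousLinearMap.add_apply,
        smul_eq_mul]; ring
    rw [hfun, hder]
    exact h2
  -- the laplacian of V
  have hlap : laplacian V = fun x => c0 * F x + ∑ i, 8 * x i ^ 2 / a i ^ 4 := by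
    funext x
    have hfd1 : fderiv ℝ V = fun y => (2 * F y) • L y := funext fun y => (hVd y).fderiv
    have h2 : HasFDerivAt (fun y => (2 * F y) • L y)
        ((2 * F x) • L + ((2:ℝ) • L x).smulRight (L x)) x :=
      ((hFd x).const_mul 2).smul L.hasFDerivAt
    have h3 : fderiv ℝ (fderiv ℝ V) x = (2 * F x) • L + ((2:ℝ) • L x).smulRight (L x) := by
      rw [hfd1]; exact h2.fderiv
    simp only [laplacian, iteratedFDeriv_two_apply, Matrix.cons_val_zero, Matrix.cons_val_one,
      Matrix.head_cons, h3]
    have h4 : ∀ i, ((2 * F x) • L + ((2:ℝ) • L x).smulRight (L x))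
        (EuclideanSpace.single i 1) (EuclideanSpace.single i 1)
        = 4 / a i ^ 2 * F x + 8 * x i ^ 2 / a i ^ 4 := by
      intro i
      simp only [ContinuousLinearMap.add_apply, ContinuousLinearMap.smul_apply,
        ContinuousLinearMap.smulRight_apply, smul_eq_mul]
      rw [hLs, hLs, hsingle]
      field_simp [haz i]
      ring
    rw [Finset.sum_congr rfl (fun i _ => h4 i), Finset.sum_add_distrib, ← Finset.sum_mul]
  -- gradient of F
  have hgF : ∀ x, gradient F x
      = (WithLp.equiv 2 (Fin N → ℝ)).symm (fun i => 2 / a i ^ 2 * x i) := by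
    intro x
    have hdual : L x = InnerProductSpace.toDual ℝ (EuclideanSpace ℝ (Fin N))
        ((WithLp.equiv 2 (Fin N → ℝ)).symm (fun i => 2 / a i ^ 2 * x i)) := by
      ext v
      rw [hLa, InnerProductSpace.toDual_apply_apply, PiLp.inner_apply]
      simp [WithLp.equiv_symm_apply, PiLp.toLp_apply, RCLike.inner_apply, conj_trivial]
      exact Finset.sum_congr rfl fun i _ => by ring
    have : HasGradientAt F ((WithLp.equiv 2 (Fin N → ℝ)).symm (fun i => 2 / a i ^ 2 * x i)) x := by
      rw [hasGradientAt_iff_hasFDerivAt, ← hdual]; exact hFd x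
    exact this.gradient
  -- gradient of laplacian V
  have hgW : ∀ x, gradient (laplacian V) x
      = (WithLp.equiv 2 (Fin N → ℝ)).symm
          (fun i => c0 * (2 / a i ^ 2 * x i) + 16 * x i / a i ^ 4) := by
    intro x
    have hW : HasFDerivAt (fun y : EuclideanSpace ℝ (Fin N) => c0 * F y + ∑ i, 8 * y i ^ 2 / a i ^ 4)
        (c0 • L x + ∑ i, (16 * x i / a i ^ 4) •
          (EuclideanSpace.proj i : EuclideanSpace ℝ (Fin N) →L[ℝ] ℝ)) x := by
      refine ((hFd x).const_mul c0).add (HasFDerivAt.fun_sum fun i _ => ?_)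
      have h1 : HasFDerivAt (fun y : EuclideanSpace ℝ (Fin N) => y i)
          (EuclideanSpace.proj i : EuclideanSpace ℝ (Fin N) →L[ℝ] ℝ) x :=
        (EuclideanSpace.proj i : EuclideanSpace ℝ (Fin N) →L[ℝ] ℝ).hasFDerivAt
      have h2 := (h1.mul h1).const_mul (8 / a i ^ 4)
      have hfun : (fun y : EuclideanSpace ℝ (Fin N) => 8 * y i ^ 2 / a i ^ 4)
          = fun y => 8 / a i ^ 4 * (y i * y i) := by funext y; ring
      have hder : (16 * x i / a i ^ 4) •
            (EuclideanSpace.proj i : EuclideanSpace ℝ (Fin N) →L[ℝ] ℝ)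
          = (8 / a i ^ 4) • (x i • (EuclideanSpace.proj i : EuclideanSpace ℝ (Fin N) →L[ℝ] ℝ)
              + x i • (EuclideanSpace.proj i : EuclideanSpace ℝ (Fin N) →L[ℝ] ℝ)) := by
        ext v
        simp only [ContinuousLinearMap.smul_apply, ContinuousLinearMap.add_apply, smul_eq_mul]
        ring
      rw [hfun, hder]
      exact h2
    have hdual : c0 • L x + ∑ i, (16 * x i / a i ^ 4) •
          (EuclideanSpace.proj i : EuclideanSpace ℝ (Fin N) →L[ℝ] ℝ)
        = InnerProductSpace.toDual ℝ (EuclideanSpace ℝ (Fin N))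
          ((WithLp.equiv 2 (Fin N → ℝ)).symm
            (fun i => c0 * (2 / a i ^ 2 * x i) + 16 * x i / a i ^ 4)) := by
      ext v
      rw [InnerProductSpace.toDual_apply_apply, PiLp.inner_apply]
      simp only [ContinuousLinearMap.add_apply, ContinuousLinearMap.smul_apply,
        ContinuousLinearMap.sum_apply, smul_eq_mul, WithLp.equiv_symm_apply, PiLp.toLp_apply,
        RCLike.inner_apply, conj_trivial]
      rw [hLa, Finset.mul_sum, ← Finset.sum_add_distrib]
      refine Finset.sum_congr rfl fun i _ => ?_
      have : (EuclideanSpace.proj i : EuclideanSpace ℝ (Fin N) →L[ℝ] ℝ) v = v i := rfl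
      rw [this]
      ring
    rw [hlap]
    have : HasGradientAt (fun y : EuclideanSpace ℝ (Fin N) => c0 * F y + ∑ i, 8 * y i ^ 2 / a i ^ 4)
        ((WithLp.equiv 2 (Fin N → ℝ)).symm
          (fun i => c0 * (2 / a i ^ 2 * x i) + 16 * x i / a i ^ 4)) x := by
      rw [hasGradientAt_iff_hasFDerivAt, ← hdual]; exact hW
    exact this.gradient
  -- main set computation
  ext x
  simp only [Set.mem_setOf_eq]
  constructor
  · rintro ⟨hx0, lam, hgrad⟩
    rw [hgW x, hgF x] at hgrad
    have hcomp : ∀ i, c0 * (2 / a i ^ 2 * x i) + 16 * x i / a i ^ 4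
        = lam * (2 / a i ^ 2 * x i) := by
      intro i
      have h := congrArg (fun v : EuclideanSpace ℝ (Fin N) => v i) hgrad
      simpa [WithLp.equiv_symm_apply, PiLp.toLp_apply, PiLp.smul_apply, smul_eq_mul] using h
    -- some coordinate is nonzero
    have hex : ∃ j, x j ≠ 0 := by
      by_contra h
      push_neg at h
      rw [hF] at hx0
      simp [h] at hx0
    have hlam : ∀ i, x i ≠ 0 → (lam - c0) * a i ^ 2 = 8 := by
      intro i hxi
      have h1 := hcomp i
      have h2 : a i ≠ 0 := haz i
      have key : ((lam - c0) * a i ^ 2 - 8) * (2 * x i / a i ^ 4) = 0 := by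
        have hz : c0 * (2 / a i ^ 2 * x i) + 16 * x i / a i ^ 4
            - lam * (2 / a i ^ 2 * x i) = 0 := by rw [h1]; ring
        calc ((lam - c0) * a i ^ 2 - 8) * (2 * x i / a i ^ 4)
            = -(c0 * (2 / a i ^ 2 * x i) + 16 * x i / a i ^ 4
              - lam * (2 / a i ^ 2 * x i)) := by field_simp; ring
          _ = 0 := by rw [hz]; ring
      have hne : (2 * x i / a i ^ 4) ≠ 0 := by
        apply div_ne_zero (by simpa using hxi) (pow_ne_zero _ h2)
      have := (mul_eq_zero.mp key).resolve_right hne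
      linarith
    have hone : ∀ i j, x i ≠ 0 → x j ≠ 0 → i = j := by
      intro i j hi hj
      by_contra hne
      have h1 := hlam i hi
      have h2 := hlam j hj
      have hlc : lam - c0 ≠ 0 := by
        intro h
        rw [h] at h1
        norm_num at h1
      have hsq : a i ^ 2 = a j ^ 2 := by
        have : (lam - c0) * a i ^ 2 = (lam - c0) * a j ^ 2 := by rw [h1, h2]
        exact mul_left_cancel₀ hlc this
      exact hdist i j hne ((sq_eq_sq₀ (ha i).le (ha j).le).mp hsq)
    obtain ⟨j, hj⟩ := hex
    have hzero : ∀ i, i ≠ j → x i = 0 := by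
      intro i hij
      by_contra h
      exact hij (hone i j h hj)
    have hx_eq : x = EuclideanSpace.single j (x j) := by
      apply PiLp.ext
      intro i
      rw [EuclideanSpace.single_apply]
      by_cases hij : i = j
      · subst hij; simp
      · rw [if_neg hij]; exact hzero i hij
    have hval : x j ^ 2 = a j ^ 2 := by
      rw [hF] at hx0
      have hx0' : (∑ i, x i ^ 2 / a i ^ 2) - 1 = 0 := hx0
      have hsum : ∑ i, x i ^ 2 / a i ^ 2 = x j ^ 2 / a j ^ 2 := by
        refine Finset.sum_eq_single j (fun i _ hij => by rw [hzero i hij]; ring)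
          (fun h => absurd (Finset.mem_univ j) h)
      rw [hsum] at hx0'
      clear hx0
      rename' hx0' => hx0
      have h2 : a j ≠ 0 := haz j
      field_simp at hx0
      linarith
    rcases sq_eq_sq_iff_eq_or_eq_neg.mp hval with h | h
    · exact ⟨j, Or.inl (by rw [hx_eq, h])⟩
    · exact ⟨j, Or.inr (by rw [hx_eq, h])⟩
  · rintro ⟨j, hj⟩
    have hback : ∀ c : ℝ, c ^ 2 = a j ^ 2 →
        F (EuclideanSpace.single j c) = 0 ∧
        ∃ lam : ℝ, gradient (laplacian V) (EuclideanSpace.single j c)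
          = lam • gradient F (EuclideanSpace.single j c) := by
      intro c hc
      have h2 : a j ≠ 0 := haz j
      constructor
      · rw [hF]
        have hterm : ∀ i : Fin N, (EuclideanSpace.single j c) i ^ 2 / a i ^ 2
            = if i = j then c ^ 2 / a i ^ 2 else 0 := fun i => by
          rw [EuclideanSpace.single_apply]; split <;> simp
        have hsum : ∑ i, (EuclideanSpace.single j c) i ^ 2 / a i ^ 2 = c ^ 2 / a j ^ 2 := by
          rw [Finset.sum_congr rfl (fun i _ => hterm i), Finset.sum_ite_eq']
          simp
        show (∑ i, (EuclideanSpace.single j c) i ^ 2 / a i ^ 2) - 1 = 0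
        rw [hsum, hc]
        field_simp
        norm_num
      · refine ⟨c0 + 8 / a j ^ 2, ?_⟩
        rw [hgW, hgF]
        apply PiLp.ext
        intro i
        simp only [WithLp.equiv_symm_apply, PiLp.toLp_apply, PiLp.smul_apply, smul_eq_mul,
          EuclideanSpace.single_apply]
        by_cases hij : i = j
        · subst hij
          rw [if_pos rfl]
          field_simp
          ring
        · rw [if_neg hij]
          ring
    rcases hj with hj | hj
    · rw [hj]; exact hback (a j) rfl
    · rw [hj]; exact hback (-(a j)) (by ring)
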